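/- With m > 0, n ≥ 2, N = n(n+1)/2, c_n = 2n(n+1)/((n−1)(n+2)(2n+1)), and y_n(r) = (N y_{nh}/(2N+1))( ((n−1)/(n+1))(m/(2r))^{n+1} + ((n+2)/n)(m/(2r))^{n} ): the boundary expression (c_n/(32m²))·y_{nh}·(ÿ_n − N y_n)|_{r=m/2} equals n²(n+1)² y_{nh}² / (32 m² (n²+n+1)(2n+1)), where dots denote derivatives with respect to u = ln r. -/

import Mathlib

open Real

lemma deriv_two_exp (c1 a c2 b : ℝ) :
    deriv (fun u => c1 * Real.exp (a * u) + c2 * Real.exp (b * u))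
      = fun u => c1 * a * Real.exp (a * u) + c2 * b * Real.exp (b * u) := by
  funext u
  have h1 : HasDerivAt (fun u => c1 * Real.exp (a * u)) (c1 * (Real.exp (a * u) * (a * 1))) u :=
    (((Real.hasDerivAt_exp (a * u)).comp u ((hasDerivAt_id u).const_mul a))).const_mul c1
  have h2 : HasDerivAt (fun u => c2 * Real.exp (b * u)) (c2 * (Real.exp (b * u) * (b * 1))) u :=
    (((Real.hasDerivAt_exp (b * u)).comp u ((hasDerivAt_id u).const_mul b))).const_mul c2
  have h3 : HasDerivAt (fun u => c1 * Real.exp (a * u) + c2 * Real.exp (b * u)) _ u := h1.add h2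
  rw [h3.deriv]; ring

/-- The minimum value of the functional in terms of the boundary datum:
(c_n/(32m²))·y_{nh}·(ÿ_n − N y_n)|_{r=m/2} = n²(n+1)² y_{nh}²/(32m²(n²+n+1)(2n+1)),
with derivatives taken with respect to u = ln r. -/
theorem minimum_value_boundary (n : ℕ) (hn : 2 ≤ n) (m ynh : ℝ) (hm : 0 < m)
    (N cn : ℝ) (hN : N = (n : ℝ) * ((n : ℝ) + 1) / 2)
    (hc : cn = 2 * (n : ℝ) * ((n : ℝ) + 1)
        / (((n : ℝ) - 1) * ((n : ℝ) + 2) * (2 * (n : ℝ) + 1)))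
    (y : ℝ → ℝ)
    (hy : y = fun u => (N * ynh / (2 * N + 1)) *
        ((((n : ℝ) - 1) / ((n : ℝ) + 1)) * (m / (2 * exp u)) ^ (n + 1)
          + (((n : ℝ) + 2) / (n : ℝ)) * (m / (2 * exp u)) ^ n)) :
    cn / (32 * m ^ 2) * ynh
        * (deriv (deriv y) (Real.log (m / 2)) - N * y (Real.log (m / 2)))
      = (n : ℝ) ^ 2 * ((n : ℝ) + 1) ^ 2 * ynh ^ 2
          / (32 * m ^ 2 * ((n : ℝ) ^ 2 + (n : ℝ) + 1) * (2 * (n : ℝ) + 1)) := by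
  have hC : (0:ℝ) < m / 2 := by linarith
  set C := N * ynh / (2 * N + 1) with hCdef
  set A := ((n : ℝ) - 1) / ((n : ℝ) + 1) with hA
  set B := ((n : ℝ) + 2) / (n : ℝ) with hB
  have hpow : ∀ (k : ℕ) (u : ℝ), (m / (2 * Real.exp u)) ^ k
      = (m / 2) ^ k * Real.exp (-(k : ℝ) * u) := by
    intro k u
    have h1 : m / (2 * Real.exp u) = (m / 2) * Real.exp (-u) := by
      rw [Real.exp_neg]
      field_simp
    rw [h1, mul_pow, ← Real.exp_nat_mul]
    ring_nf
  have hy2 : y = fun u => (C * A * (m / 2) ^ (n + 1)) * Real.exp ((-((n : ℝ) + 1)) * u)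
      + (C * B * (m / 2) ^ n) * Real.exp ((-(n : ℝ)) * u) := by
    funext u
    rw [hy]
    simp only [hpow]
    push_cast
    ring
  rw [hy2, deriv_two_exp, deriv_two_exp]
  have hexp : Real.exp (Real.log (m / 2)) = m / 2 := Real.exp_log hC
  have hval : ∀ k : ℕ, Real.exp ((-(k : ℝ)) * Real.log (m / 2)) = ((m / 2) ^ k)⁻¹ := by
    intro k
    rw [neg_mul, Real.exp_neg, Real.exp_nat_mul, hexp]
  have e1 := hval (n + 1)
  have e2 := hval n
  push_cast at e1
  simp only [e1, e2]
  have hn' : (2:ℝ) ≤ (n : ℝ) := by exact_mod_cast hn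
  have h0 : (n : ℝ) ≠ 0 := by linarith
  have h1 : (n : ℝ) + 1 ≠ 0 := by linarith
  have h2 : (n : ℝ) - 1 ≠ 0 := by linarith
  have h3 : (n : ℝ) + 2 ≠ 0 := by linarith
  have h4 : 2 * (n : ℝ) + 1 ≠ 0 := by linarith
  have h5 : (2 * N + 1) ≠ 0 := by rw [hN]; nlinarith
  have hm0 : m ≠ 0 := ne_of_gt hm
  have hp1 : (m / 2) ^ (n + 1) ≠ 0 := pow_ne_zero _ (ne_of_gt hC)
  have hp2 : (m / 2) ^ n ≠ 0 := pow_ne_zero _ (ne_of_gt hC)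
  rw [hc, hCdef, hA, hB, hN]
  have h6 : (n : ℝ) ^ 2 + (n : ℝ) + 1 ≠ 0 := by nlinarith
  field_simp
  ring
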